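/- Let 0 < a ≤ b be natural numbers and let d = a + b. If r ≤ a + b − 1, then there is no way to write the monomial x₀^a x₁^b in ℝ[x₀,x₁] as a linear combination of r d-th powers of real linear forms: there exist no scalars α₁,…,α_r ∈ ℝ and linear forms L₁,…,L_r ∈ ℝ[x₀,x₁] with x₀^a x₁^b = ∑_{i=1}^{r} α_i · L_i^d. -/

import Mathlib

section PolynomialLemmas
open Polynomial


section RealRootedLemmas

lemma realRooted_derivative {f : ℝ[X]} (hf : f.roots.card = f.natDegree)
    (hd : 0 < f.natDegree) :
    f.derivative.roots.card = f.derivative.natDegree ∧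
      f.derivative.natDegree = f.natDegree - 1 := by
  have h1 := Polynomial.card_roots_le_derivative f
  have h2 := Polynomial.card_roots' f.derivative
  have h3 := Polynomial.natDegree_derivative_le f
  omega

lemma lemA_final (f : ℝ[X]) (n : ℕ) (hn : f.natDegree = n) (h3 : 3 ≤ n)
    (hrr : f.roots.card = f.natDegree)
    (hmid : ∀ k, 1 ≤ k → k ≤ n - 1 → f.coeff k = 0)
    (hc0 : f.coeff 0 ≠ 0) : False := by
  have hf0 : f ≠ 0 := fun h => hc0 (by simp [h])
  have hlead : f.coeff n ≠ 0 := by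
    rw [← hn]; exact Polynomial.leadingCoeff_ne_zero.mpr hf0
  have hncast : (n : ℝ) ≠ 0 := Nat.cast_ne_zero.mpr (by omega)
  have f_eq : f = C (f.coeff 0) + C (f.coeff n) * X ^ n := by
    ext j
    simp only [Polynomial.coeff_add, Polynomial.coeff_C, Polynomial.coeff_C_mul,
      Polynomial.coeff_X_pow]
    by_cases hj0 : j = 0
    · subst hj0
      have : ¬ (0 = n) := by omega
      simp [this]
    · by_cases hjn : j = n
      · subst hjn
        simp [hj0]
      · rcases lt_or_gt_of_ne hjn with hlt | hgt
        · rw [hmid j (by omega) (by omega)]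
          simp [hj0, hjn]
        · have : f.coeff j = 0 := Polynomial.coeff_eq_zero_of_natDegree_lt (by omega)
          simp [this, hj0, hjn]
  have fd_eq : f.derivative = C ((n : ℝ) * f.coeff n) * X ^ (n-1) := by
    conv_lhs => rw [f_eq]
    rw [Polynomial.derivative_add, Polynomial.derivative_C, Polynomial.derivative_C_mul,
      Polynomial.derivative_X_pow, zero_add, C_mul]
    ring
  have hsimple : ∀ r : ℝ, f.roots.count r ≤ 1 := by
    intro r
    by_contra h
    push_neg at h
    have hcount := Polynomial.count_roots (a := r) f
    have hr : f.IsRoot r :=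
      (Polynomial.rootMultiplicity_pos hf0).mp (by omega)
    have hd2 : 0 < f.derivative.rootMultiplicity r := by
      rw [Polynomial.derivative_rootMultiplicity_of_root hr]
      omega
    have hfd0 : f.derivative ≠ 0 := by
      rw [fd_eq]
      exact mul_ne_zero (by rw [ne_eq, Polynomial.C_eq_zero]; exact mul_ne_zero hncast hlead)
        (pow_ne_zero _ Polynomial.X_ne_zero)
    have hrd : f.derivative.IsRoot r := (Polynomial.rootMultiplicity_pos hfd0).mp hd2
    rw [fd_eq] at hrd
    simp only [Polynomial.IsRoot, Polynomial.eval_mul, Polynomial.eval_C,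
      Polynomial.eval_pow, Polynomial.eval_X, mul_eq_zero] at hrd
    have hr0 : r = 0 := by
      rcases hrd with (h'' | h'') | h'
      · exact absurd h'' hncast
      · exact absurd h'' hlead
      · exact pow_eq_zero_iff (by omega) |>.mp h'
    rw [hr0] at hr
    exact hc0 (by rwa [Polynomial.coeff_zero_eq_eval_zero])
  have hnodup : f.roots.Nodup := Multiset.nodup_iff_count_le_one.mpr hsimple
  have hpow : ∀ r ∈ f.roots, f.coeff n * r ^ n = -(f.coeff 0) := by
    intro r hr
    have := Polynomial.isRoot_of_mem_roots hr
    rw [Polynomial.IsRoot, f_eq] at this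
    simp only [Polynomial.eval_add, Polynomial.eval_C, Polynomial.eval_mul,
      Polynomial.eval_pow, Polynomial.eval_X] at this
    linarith
  have hne : f.roots ≠ 0 := by
    intro h
    rw [h] at hrr
    simp at hrr
    omega
  obtain ⟨r0, hr0⟩ := Multiset.exists_mem_of_ne_zero hne
  have hsub : f.roots.toFinset ⊆ {r0, -r0} := by
    intro s hs
    rw [Multiset.mem_toFinset] at hs
    have h1 := hpow s hs
    have h2 := hpow r0 hr0
    have hpows : s ^ n = r0 ^ n := by
      have := h1.trans h2.symm
      exact mul_left_cancel₀ hlead this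
    have habs : |s| = |r0| := by
      have h' : |s| ^ n = |r0| ^ n := by rw [← abs_pow, ← abs_pow, hpows]
      exact (pow_left_inj₀ (abs_nonneg _) (abs_nonneg _) (by omega)).mp h'
    rcases abs_eq_abs.mp habs with h' | h'
    · simp [h']
    · simp [h']
  have hcard : f.roots.toFinset.card ≤ 2 :=
    (Finset.card_le_card hsub).trans ((Finset.card_insert_le _ _).trans (by simp))
  rw [Multiset.toFinset_card_of_nodup hnodup, hrr, hn] at hcard
  omega

lemma reverse_X_sub_C' (a : ℝ) (ha : a ≠ 0) :
    (X - C a).reverse = C (-a) * (X - C a⁻¹) := by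
  have h1 : (X - C a).natDegree = 1 := natDegree_X_sub_C a
  have : (X - C a).reverse = reflect 1 (X - C a) := by rw [reverse, h1]
  have hX : reflect 1 (X : ℝ[X]) = 1 := by
    have := reflect_monomial 1 1 (R := ℝ)
    simpa using this
  rw [this, reflect_sub, reflect_C, hX, pow_one]
  have h2 : C (-a) * (X - C a⁻¹) = 1 - C a * X := by
    rw [C_neg, neg_mul, mul_sub, ← C_mul, mul_inv_cancel₀ ha, C_1]
    ring
  rw [h2]

lemma reverse_multiset_prod (m : Multiset ℝ) (hm : ∀ r ∈ m, r ≠ 0) :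
    ((m.map fun a => X - C a).prod).reverse
      = C ((m.map fun a => -a).prod) * (m.map fun a => X - C a⁻¹).prod := by
  induction m using Multiset.induction with
  | empty => simpa using Polynomial.reverse_C (1:ℝ)
  | cons a s ih =>
    simp only [Multiset.map_cons, Multiset.prod_cons]
    rw [reverse_mul_of_domain, ih (fun r hr => hm r (Multiset.mem_cons_of_mem hr)),
      reverse_X_sub_C' a (hm a (Multiset.mem_cons_self a s)), C_mul]
    ring

lemma realRooted_reverse {f : ℝ[X]} (hrr : f.roots.card = f.natDegree)
    (hc0 : f.coeff 0 ≠ 0) :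
    f.reverse.roots.card = f.reverse.natDegree ∧ f.reverse.natDegree = f.natDegree := by
  have hf0 : f ≠ 0 := fun h => hc0 (by simp [h])
  have hdeg : f.reverse.natDegree = f.natDegree := by
    rw [reverse_natDegree]
    have : f.natTrailingDegree = 0 := natTrailingDegree_eq_zero.mpr (Or.inr hc0)
    omega
  refine ⟨?_, hdeg⟩
  have hroots0 : ∀ r ∈ f.roots, r ≠ 0 := by
    intro r hr h0
    rw [h0] at hr
    exact hc0 (by rw [coeff_zero_eq_eval_zero]; exact isRoot_of_mem_roots hr)
  have key := C_leadingCoeff_mul_prod_multiset_X_sub_C (p := f) hrr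
  have : f.reverse = C f.leadingCoeff * ((f.roots.map fun a => X - C a).prod).reverse := by
    conv_lhs => rw [← key]
    rw [reverse_mul_of_domain, reverse_C]
  rw [hdeg, this, reverse_multiset_prod _ hroots0, ← mul_assoc, ← C_mul]
  have hprodne : f.leadingCoeff * (f.roots.map fun a => -a).prod ≠ 0 := by
    apply mul_ne_zero (leadingCoeff_ne_zero.mpr hf0)
    apply Multiset.prod_ne_zero
    intro h
    obtain ⟨r, hr, hr0⟩ := Multiset.mem_map.mp h
    exact hroots0 r hr (neg_eq_zero.mp hr0)
  rw [roots_C_mul _ hprodne]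
  have hmm : (Multiset.map (fun a => X - C a⁻¹) f.roots)
      = (Multiset.map (fun a => X - C a) (f.roots.map (fun a => a⁻¹))) := by
    rw [Multiset.map_map]; rfl
  rw [hmm, roots_multiset_prod_X_sub_C, Multiset.card_map, hrr]

lemma lemA : ∀ n : ℕ, ∀ f : ℝ[X], f.natDegree = n → 2 ≤ n →
    f.roots.card = f.natDegree → f.coeff (n-1) = 0 → f.coeff (n-2) = 0 →
    ∀ j < n, f.coeff j = 0 := by
  intro n
  induction n using Nat.strong_induction_on with
  | _ n IH =>
    intro f hn h2 hrr hc1 hc2 j hj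
    rcases eq_or_lt_of_le h2 with h2' | h3
    · subst h2'
      interval_cases j
      · simpa using hc2
      · simpa using hc1
    · have hd : 0 < f.natDegree := by omega
      obtain ⟨hrr', hdeg'⟩ := realRooted_derivative hrr hd
      have hmid : ∀ k, 1 ≤ k → k ≤ n - 1 → f.coeff k = 0 := by
        intro k hk1 hk2
        have := IH (n-1) (by omega) f.derivative (by omega) (by omega) hrr'
          (by rw [Polynomial.coeff_derivative]
              have : n - 1 - 1 + 1 = n - 1 := by omega
              rw [this, hc1]; ring)
          (by rw [Polynomial.coeff_derivative]
              have : n - 1 - 2 + 1 = n - 2 := by omega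
              rw [this, hc2]; ring)
          (k-1) (by omega)
        rw [Polynomial.coeff_derivative] at this
        have hk : k - 1 + 1 = k := by omega
        rw [hk] at this
        have hne : ((k - 1 : ℕ) : ℝ) + 1 ≠ 0 := by positivity
        have := mul_eq_zero.mp this
        tauto
      rcases Nat.eq_zero_or_pos j with rfl | hj0
      swap
      · exact hmid j hj0 (by omega)
      by_contra hc0
      exact lemA_final f n hn (by omega) hrr hmid hc0

lemma lemB {f : ℝ[X]} (hrr : f.roots.card = f.natDegree) (hc0 : f.coeff 0 ≠ 0)
    (h1 : f.coeff 1 = 0) (h2 : f.coeff 2 = 0) (hd : 2 ≤ f.natDegree) : False := by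
  have hf0 : f ≠ 0 := fun h => hc0 (by simp [h])
  set n := f.natDegree with hn
  rcases eq_or_lt_of_le hd with h2' | h3
  · exact Polynomial.leadingCoeff_ne_zero.mpr hf0 (by rwa [leadingCoeff, ← hn, ← h2'])
  obtain ⟨hrr', hdeg⟩ := realRooted_reverse hrr hc0
  have e1 : f.reverse.coeff (n-1) = 0 := by
    rw [coeff_reverse, revAt_le (by omega)]
    have : n - (n - 1) = 1 := by omega
    rw [this, h1]
  have e2 : f.reverse.coeff (n-2) = 0 := by
    rw [coeff_reverse, revAt_le (by omega)]
    have : n - (n - 2) = 2 := by omega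
    rw [this, h2]
  have := lemA n f.reverse hdeg (by omega) hrr' e1 e2
    0 (by omega)
  rw [coeff_zero_reverse] at this
  exact Polynomial.leadingCoeff_ne_zero.mpr hf0 this

lemma lemC : ∀ k : ℕ, ∀ f : ℝ[X], f.roots.card = f.natDegree → f.coeff k ≠ 0 →
    f.coeff (k+1) = 0 → f.coeff (k+2) = 0 → k + 2 ≤ f.natDegree → False := by
  intro k
  induction k with
  | zero => exact fun f hrr h0 h1 h2 hd => lemB hrr h0 h1 h2 (by omega)
  | succ k IH =>
    intro f hrr h0 h1 h2 hd
    obtain ⟨hrr', hdeg'⟩ := realRooted_derivative hrr (by omega)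
    refine IH f.derivative hrr' ?_ ?_ ?_ (by omega)
    · rw [Polynomial.coeff_derivative]
      exact mul_ne_zero h0 (by positivity)
    · rw [Polynomial.coeff_derivative, h1]; ring
    · rw [Polynomial.coeff_derivative]
      have : k + 1 + 2 = k + 3 := by omega
      rw [show k + 2 + 1 = k + 1 + 2 from by omega, h2]; ring

lemma noConsecZero : ∀ k : ℕ, ∀ f : ℝ[X], f.roots.card = f.natDegree → f.coeff 0 ≠ 0 →
    k + 1 ≤ f.natDegree → f.coeff k = 0 → f.coeff (k+1) = 0 → False := by
  intro k
  induction k with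
  | zero => exact fun f _ hc0 _ h0 _ => hc0 h0
  | succ k IH =>
    intro f hrr hc0 hd h0 h1
    by_cases hk : f.coeff k = 0
    · exact IH f hrr hc0 (by omega) hk h0
    · exact lemC k f hrr hk h0 (by rwa [show k + 2 = k + 1 + 1 from rfl]) (by omega)

end RealRootedLemmas



lemma exists_good_poly (d a : ℕ) (ha1 : 1 ≤ a) (ha2 : a + 1 ≤ d) (T : Finset ℝ) (δ : ℕ)
    (hδ : δ ≤ 1) (hTd : T.card + δ + 1 ≤ d) :
    ∃ P : ℝ[X], P.natDegree + δ ≤ d ∧ P.coeff a ≠ 0 ∧ ∀ t ∈ T, P.eval t = 0 := by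
  classical
  set s := T.card with hs
  set ε : ℕ := if (0:ℝ) ∈ T then 1 else 0 with hε
  have hε1 : ε ≤ 1 := by rw [hε]; split <;> omega
  set q₂ : ℝ[X] := ∏ t ∈ T.erase 0, (X - C t) with hq2
  set q : ℝ[X] := ∏ t ∈ T, (X - C t) with hq
  have hqmonic : q.Monic := monic_prod_of_monic _ _ (fun t _ => monic_X_sub_C t)
  have hq2monic : q₂.Monic := monic_prod_of_monic _ _ (fun t _ => monic_X_sub_C t)
  have hqdeg : q.natDegree = s := by
    rw [hq, natDegree_prod_of_monic _ _ (fun t _ => monic_X_sub_C t)]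
    simp [hs]
  have hcarderase : (T.erase 0).card = s - ε := by
    rw [hε]
    split
    · rw [Finset.card_erase_of_mem ‹_›]
    · rw [Finset.erase_eq_of_notMem ‹_›]
      omega
  have hq2deg : q₂.natDegree = s - ε := by
    rw [hq2, natDegree_prod_of_monic _ _ (fun t _ => monic_X_sub_C t)]
    simp only [natDegree_X_sub_C]
    rw [Finset.sum_const, smul_eq_mul, mul_one, hcarderase]
  have hqsplit : q = X ^ ε * q₂ := by
    rw [hq, hq2, hε]
    split
    · rw [← Finset.mul_prod_erase T _ ‹_›, pow_one, C_0, sub_zero]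
    · rw [Finset.erase_eq_of_notMem ‹_›, pow_zero, one_mul]
  -- q₂ real rooted, coeff 0 ≠ 0
  have hq2rr : q₂.roots.card = q₂.natDegree := by
    rw [hq2, roots_prod_X_sub_C, hq2deg, ← hcarderase]
    rfl
  have hq2c0 : q₂.coeff 0 ≠ 0 := by
    rw [coeff_zero_eq_eval_zero, hq2, eval_prod]
    rw [Finset.prod_ne_zero_iff]
    intro t ht
    simp only [eval_sub, eval_X, eval_C, zero_sub, ne_eq, neg_eq_zero]
    exact Finset.ne_of_mem_erase ht
  -- coeff of q at index k equals coeff of q₂ at k - ε for k ≥ ε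
  have hqcoeff : ∀ k, ε ≤ k → q.coeff k = q₂.coeff (k - ε) := by
    intro k hk
    rw [hqsplit, coeff_X_pow_mul', if_pos hk]
  -- choice of k
  have hkey : ∃ k, k ≤ a ∧ a - k + s ≤ d - δ ∧ q.coeff k ≠ 0 := by
    by_cases hsa : s ≤ a
    · refine ⟨s, hsa, by omega, ?_⟩
      rw [← hqdeg]
      rw [hqmonic.coeff_natDegree]
      exact one_ne_zero
    · push_neg at hsa
      by_cases hw : a + s + δ ≤ d + ε
      · refine ⟨ε, by omega, by omega, ?_⟩
        rw [hqcoeff ε le_rfl]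
        simpa using hq2c0
      · push_neg at hw
        set w : ℕ := a + s + δ - d with hwdef
        have hwε : ε + 1 ≤ w := by omega
        have hw1a : w + 1 ≤ a := by omega
        have hws : w + 1 ≤ s := by omega
        have hnc : q₂.coeff (w - ε) ≠ 0 ∨ q₂.coeff (w - ε + 1) ≠ 0 := by
          by_contra hcon
          push_neg at hcon
          exact noConsecZero (w - ε) q₂ hq2rr hq2c0 (by omega) hcon.1 hcon.2
        rcases hnc with h | h
        · exact ⟨w, by omega, by omega, by rw [hqcoeff w (by omega)]; exact h⟩
        · refine ⟨w + 1, by omega, by omega, ?_⟩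
          rw [hqcoeff (w+1) (by omega), show w + 1 - ε = w - ε + 1 from by omega]
          exact h
  obtain ⟨k, hka, hkd, hknz⟩ := hkey
  refine ⟨X ^ (a - k) * q, ?_, ?_, ?_⟩
  · rw [natDegree_mul (pow_ne_zero _ X_ne_zero) hqmonic.ne_zero, natDegree_X_pow, hqdeg]
    omega
  · rw [coeff_X_pow_mul', if_pos (by omega : a - k ≤ a), show a - (a - k) = k from by omega]
    exact hknz
  · intro t ht
    rw [eval_mul, hq, eval_prod]
    apply mul_eq_zero_of_right
    exact Finset.prod_eq_zero ht (by simp)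

end PolynomialLemmas

open MvPolynomial

section MvLemmas


lemma single_add_single_eq_iff (n j k : ℕ) (hj : j ≤ n) (hk : k ≤ n) :
    (Finsupp.single (0 : Fin 2) k + Finsupp.single (1 : Fin 2) (n - k)
      = Finsupp.single (0 : Fin 2) j + Finsupp.single (1 : Fin 2) (n - j)) ↔ k = j := by
  constructor
  · intro h
    have := DFunLike.congr_fun h (0 : Fin 2)
    simpa using this
  · rintro rfl; rfl

lemma X_pow_mul_X_pow_eq (k m : ℕ) :
    (X 0 ^ k * X 1 ^ m : MvPolynomial (Fin 2) ℝ)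
      = monomial (Finsupp.single 0 k + Finsupp.single 1 m) 1 := by
  rw [X_pow_eq_monomial, X_pow_eq_monomial, monomial_mul, one_mul]

lemma coeff_X_pow_mul_X_pow (n j a b : ℕ) (hj : j ≤ n) (ha : a ≤ n) (hb : b = n - a) :
    MvPolynomial.coeff (Finsupp.single 0 j + Finsupp.single 1 (n - j))
      ((X 0 ^ a * X 1 ^ b : MvPolynomial (Fin 2) ℝ)) = if j = a then 1 else 0 := by
  rw [hb, X_pow_mul_X_pow_eq, coeff_monomial]
  by_cases h : j = a
  · subst h; simp
  · rw [if_neg (fun hc => h ((single_add_single_eq_iff n j a hj ha).mp hc).symm), if_neg h]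

lemma hom1_decomp (L : MvPolynomial (Fin 2) ℝ) (hL : L.IsHomogeneous 1) :
    L = C (MvPolynomial.coeff (Finsupp.single 0 1) L) * X 0
      + C (MvPolynomial.coeff (Finsupp.single 1 1) L) * X 1 := by
  ext m
  have hrhs : MvPolynomial.coeff m
      (C (MvPolynomial.coeff (Finsupp.single 0 1) L) * X 0
        + C (MvPolynomial.coeff (Finsupp.single 1 1) L) * X 1)
      = (if m = Finsupp.single 0 1 then MvPolynomial.coeff (Finsupp.single 0 1) L else 0)
        + (if m = Finsupp.single 1 1 then MvPolynomial.coeff (Finsupp.single 1 1) L else 0) := by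
    rw [coeff_add, coeff_C_mul, coeff_C_mul, coeff_X', coeff_X']
    congr 1 <;> [skip; skip] <;> split_ifs with h₁ h₂ <;> simp_all
  rw [hrhs]
  by_cases h0 : m = Finsupp.single 0 1
  · subst h0
    rw [if_pos rfl, if_neg (by intro h; have := DFunLike.congr_fun h (0 : Fin 2); simp at this)]
    ring
  · by_cases h1 : m = Finsupp.single 1 1
    · subst h1
      rw [if_pos rfl, if_neg (by intro h; have := DFunLike.congr_fun h (1 : Fin 2); simp at this)]
      ring
    · rw [if_neg h0, if_neg h1, add_zero]
      by_contra hc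
      have hdeg := hL hc
      -- m.degree = 1 means m = single i 1 for some i
      have hsum : m 0 + m 1 = 1 := by
        have hdeg' : m.degree = 1 := by
          rw [Finsupp.degree_eq_weight_one]
          exact hdeg
        rw [Finsupp.degree_eq_sum] at hdeg'
        · simpa [Fin.sum_univ_two] using hdeg'
      have : m = Finsupp.single 0 1 ∨ m = Finsupp.single 1 1 := by
        rcases Nat.eq_zero_or_pos (m 0) with h | h
        · right
          ext i
          fin_cases i <;> simp [Finsupp.single_apply] <;> omega
        · left
          ext i
          fin_cases i <;> simp [Finsupp.single_apply] <;> omega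
      tauto

lemma coeff_linear_pow (c dd : ℝ) (n j : ℕ) (hj : j ≤ n) :
    MvPolynomial.coeff (Finsupp.single 0 j + Finsupp.single 1 (n - j))
      ((C c * X 0 + C dd * X 1 : MvPolynomial (Fin 2) ℝ) ^ n)
      = (n.choose j : ℝ) * c ^ j * dd ^ (n - j) := by
  rw [add_pow]
  rw [coeff_sum]  -- maybe name is different
  have hterm : ∀ k ∈ Finset.range (n + 1),
      MvPolynomial.coeff (Finsupp.single 0 j + Finsupp.single 1 (n - j))
        ((C c * X 0) ^ k * (C dd * X 1) ^ (n - k) * (n.choose k : MvPolynomial (Fin 2) ℝ))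
      = if k = j then (n.choose j : ℝ) * c ^ j * dd ^ (n - j) else 0 := by
    intro k hk
    rw [Finset.mem_range] at hk
    have : (C c * X 0) ^ k * (C dd * X 1) ^ (n - k) * (n.choose k : MvPolynomial (Fin 2) ℝ)
        = monomial (Finsupp.single 0 k + Finsupp.single 1 (n - k))
            ((n.choose k : ℝ) * c ^ k * dd ^ (n - k)) := by
      rw [mul_pow, mul_pow, ← C_pow, ← C_pow]
      rw [show ((n.choose k : ℕ) : MvPolynomial (Fin 2) ℝ) = C ((n.choose k : ℕ) : ℝ) by
        rw [C_eq_coe_nat]]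
      rw [X_pow_eq_monomial, X_pow_eq_monomial]
      rw [C_mul_monomial, C_mul_monomial]
      rw [monomial_mul]
      rw [mul_comm ((monomial _ _) : MvPolynomial (Fin 2) ℝ) (C _)]
      rw [C_mul_monomial]
      congr 1
      ring
    rw [this, coeff_monomial]
    by_cases h : k = j
    · subst h
      simp
    · rw [if_neg (fun hc => h ((single_add_single_eq_iff n j k hj (by omega)).mp hc)),
        if_neg h]
  rw [Finset.sum_congr rfl hterm, Finset.sum_ite_eq' (Finset.range (n+1)) j]
  simp [Nat.lt_succ_of_le hj]

end MvLemmas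

/-- If `0 < a ≤ b` and `r ≤ a + b - 1`, the monomial `x₀^a x₁^b` in `ℝ[x₀,x₁]`
is not a linear combination of `r` `(a+b)`-th powers of real linear forms. -/





theorem monomial_real_no_short_waring (a b r : ℕ) (ha : 0 < a) (hab : a ≤ b)
    (hr : r ≤ a + b - 1) :
    ¬ ∃ (α : Fin r → ℝ) (L : Fin r → MvPolynomial (Fin 2) ℝ),
      (∀ i, (L i).IsHomogeneous 1) ∧
      (X 0 ^ a * X 1 ^ b : MvPolynomial (Fin 2) ℝ) = ∑ i, α i • L i ^ (a + b) := by
  classical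
  rintro ⟨α, L, hLhom, heq⟩
  set d := a + b with hd
  have hd2 : 2 ≤ d := by omega
  have had : a + 1 ≤ d := by omega
  set c : Fin r → ℝ := fun i => MvPolynomial.coeff (Finsupp.single 0 1) (L i) with hc
  set dd : Fin r → ℝ := fun i => MvPolynomial.coeff (Finsupp.single 1 1) (L i) with hdd
  -- coefficient equations
  have hcoeffeq : ∀ j, j ≤ d → (if j = a then (1:ℝ) else 0)
      = ∑ i, α i * ((d.choose j : ℝ) * c i ^ j * dd i ^ (d - j)) := by
    intro j hj
    have h0 := congrArg (MvPolynomial.coeff (Finsupp.single 0 j + Finsupp.single 1 (d - j))) heq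
    rw [coeff_X_pow_mul_X_pow d j a b hj (by omega) (by omega), coeff_sum] at h0
    rw [h0]
    apply Finset.sum_congr rfl
    intro i _
    rw [coeff_smul, hom1_decomp (L i) (hLhom i), coeff_linear_pow _ _ _ _ hj]
    rfl
  -- the set of slopes
  set T : Finset ℝ := (Finset.univ.filter (fun i => dd i ≠ 0)).image (fun i => c i / dd i)
    with hT
  set δ : ℕ := if ∃ i, dd i = 0 ∧ c i ≠ 0 then 1 else 0 with hδdef
  have hδ1 : δ ≤ 1 := by rw [hδdef]; split <;> omega
  have hTcard : T.card + δ + 1 ≤ d := by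
    have himg : T.card ≤ (Finset.univ.filter (fun i => dd i ≠ 0)).card := by
      rw [hT]; exact Finset.card_image_le
    rw [hδdef]
    split
    · rename_i hinf
      obtain ⟨i₀, h1, h2⟩ := hinf
      have hsub : (Finset.univ.filter (fun i => dd i ≠ 0)) ⊆ Finset.univ.erase i₀ := by
        intro i hi
        rw [Finset.mem_filter] at hi
        rw [Finset.mem_erase]
        exact ⟨fun he => hi.2 (he ▸ h1), Finset.mem_univ i⟩
      have hcard := (Finset.card_le_card hsub).trans_eq
        (by rw [Finset.card_erase_of_mem (Finset.mem_univ i₀), Finset.card_univ,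
          Fintype.card_fin])
      omega
    · have : (Finset.univ.filter (fun i => dd i ≠ 0)).card ≤ r := by
        calc _ ≤ (Finset.univ : Finset (Fin r)).card := Finset.card_le_card (Finset.filter_subset _ _)
        _ = r := by rw [Finset.card_univ, Fintype.card_fin]
      omega
  obtain ⟨P, hP1, hP2, hP3⟩ := exists_good_poly d a ha had T δ hδ1 hTcard
  -- vanishing sums
  have hvanish : ∀ i, ∑ j ∈ Finset.range (d+1), P.coeff j * c i ^ j * dd i ^ (d - j) = 0 := by
    intro i
    by_cases hddi : dd i = 0
    · by_cases hci : c i = 0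
      · apply Finset.sum_eq_zero
        intro j hj
        rcases Nat.eq_zero_or_pos j with rfl | hj0
        · rw [hddi, zero_pow (by omega)]; ring
        · rw [hci, zero_pow (by omega)]; ring
      · have hδ1' : δ = 1 := by rw [hδdef, if_pos ⟨i, hddi, hci⟩]
        apply Finset.sum_eq_zero
        intro j hj
        rw [Finset.mem_range] at hj
        by_cases hjd : j = d
        · subst hjd
          rw [Polynomial.coeff_eq_zero_of_natDegree_lt (by omega)]
          ring
        · rw [hddi, zero_pow (by omega)]; ring
    · have hmemT : c i / dd i ∈ T := by
        rw [hT]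
        exact Finset.mem_image.mpr ⟨i, Finset.mem_filter.mpr ⟨Finset.mem_univ i, hddi⟩, rfl⟩
      have hev : P.eval (c i / dd i) = 0 := hP3 _ hmemT
      have hsum : ∑ j ∈ Finset.range (d+1), P.coeff j * c i ^ j * dd i ^ (d - j)
          = dd i ^ d * P.eval (c i / dd i) := by
        rw [Polynomial.eval_eq_sum_range' (n := d + 1) (by omega), Finset.mul_sum]
        apply Finset.sum_congr rfl
        intro j hj
        rw [Finset.mem_range] at hj
        rw [div_pow, pow_sub₀ _ hddi (by omega)]
        field_simp
      rw [hsum, hev, mul_zero]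
  -- final contradiction
  have hchoose : ∀ j, j ≤ d → ((d.choose j : ℝ) ≠ 0) := fun j hj =>
    Nat.cast_ne_zero.mpr (Nat.choose_pos hj).ne'
  have key : ∑ j ∈ Finset.range (d+1), P.coeff j / (d.choose j : ℝ) * (if j = a then (1:ℝ) else 0)
      = ∑ j ∈ Finset.range (d+1), P.coeff j / (d.choose j : ℝ)
          * (∑ i, α i * ((d.choose j : ℝ) * c i ^ j * dd i ^ (d - j))) := by
    apply Finset.sum_congr rfl
    intro j hj
    rw [Finset.mem_range] at hj
    rw [← hcoeffeq j (by omega)]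
  have hLHS : ∑ j ∈ Finset.range (d+1), P.coeff j / (d.choose j : ℝ)
      * (if j = a then (1:ℝ) else 0) = P.coeff a / (d.choose a : ℝ) := by
    rw [Finset.sum_eq_single a]
    · rw [if_pos rfl, mul_one]
    · intro j _ hja
      rw [if_neg hja, mul_zero]
    · intro h
      exact absurd (Finset.mem_range.mpr (by omega)) h
  have hRHS : ∑ j ∈ Finset.range (d+1), P.coeff j / (d.choose j : ℝ)
      * (∑ i, α i * ((d.choose j : ℝ) * c i ^ j * dd i ^ (d - j))) = 0 := by
    have hterm : ∀ i : Fin r, ∀ j ∈ Finset.range (d+1),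
        P.coeff j / (d.choose j : ℝ) * (α i * ((d.choose j : ℝ) * c i ^ j * dd i ^ (d - j)))
        = α i * (P.coeff j * c i ^ j * dd i ^ (d - j)) := by
      intro i j hj
      rw [Finset.mem_range] at hj
      have hC := hchoose j (by omega)
      field_simp
    have hswap : ∑ j ∈ Finset.range (d+1), P.coeff j / (d.choose j : ℝ)
        * (∑ i, α i * ((d.choose j : ℝ) * c i ^ j * dd i ^ (d - j)))
        = ∑ i, α i * (∑ j ∈ Finset.range (d+1), P.coeff j * c i ^ j * dd i ^ (d - j)) := by
      calc ∑ j ∈ Finset.range (d+1), P.coeff j / (d.choose j : ℝ)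
            * (∑ i, α i * ((d.choose j : ℝ) * c i ^ j * dd i ^ (d - j)))
          = ∑ j ∈ Finset.range (d+1), ∑ i, P.coeff j / (d.choose j : ℝ)
            * (α i * ((d.choose j : ℝ) * c i ^ j * dd i ^ (d - j))) :=
            Finset.sum_congr rfl fun j _ => Finset.mul_sum _ _ _
        _ = ∑ i, ∑ j ∈ Finset.range (d+1), P.coeff j / (d.choose j : ℝ)
            * (α i * ((d.choose j : ℝ) * c i ^ j * dd i ^ (d - j))) := Finset.sum_comm
        _ = ∑ i, α i * (∑ j ∈ Finset.range (d+1),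
            P.coeff j * c i ^ j * dd i ^ (d - j)) := by
            refine Finset.sum_congr rfl fun i _ => ?_
            rw [Finset.mul_sum]
            exact Finset.sum_congr rfl (hterm i)
    rw [hswap]
    apply Finset.sum_eq_zero
    intro i _
    rw [hvanish i, mul_zero]
  rw [hLHS, hRHS] at key
  exact hP2 (by
    have := div_eq_zero_iff.mp key
    rcases this with h | h
    · exact h
    · exact absurd h (hchoose a (by omega)))
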